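/- arXiv:1111.6701 — 3 statements merged into one kernel-verified Lean document; each statement's English description precedes it below -/
import Mathlib

section
/- If x ∈ L²(ℝ) is band-limited (its Fourier transform vanishes outside [-Ω, Ω] for some Ω > 0) and x vanishes almost everywhere on a nondegenerate interval (q, s), then x is identically zero. -/
open MeasureTheory Set

set_option maxHeartbeats 1000000 in
lemma aux_diff (Ω : ℝ) (hΩ : 0 < Ω) (X : ℝ → ℂ)
    (hXi : IntegrableOn X (Icc (-Ω) Ω) volume) :
    Differentiable ℂ (fun z : ℂ => ∫ ω in Icc (-Ω) Ω, X ω * Complex.exp (Complex.I * ω * z)) := by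
  intro z₀
  set μ : Measure ℝ := volume.restrict (Icc (-Ω) Ω) with hμ
  set F : ℂ → ℝ → ℂ := fun z ω => X ω * Complex.exp (Complex.I * ω * z) with hF
  set F' : ℂ → ℝ → ℂ := fun z ω => X ω * (Complex.I * ω * Complex.exp (Complex.I * ω * z)) with hF'
  set bound : ℝ → ℝ := fun ω => ‖X ω‖ * (Ω * Real.exp (Ω * (‖z₀‖ + 1))) with hbound
  have hmeas : ∀ z : ℂ, AEStronglyMeasurable (F z) μ := by
    intro z
    apply AEStronglyMeasurable.mul hXi.1
    apply Continuous.aestronglyMeasurable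
    exact Complex.continuous_exp.comp ((continuous_const.mul Complex.continuous_ofReal).mul continuous_const)
  have hF_meas : ∀ᶠ z in nhds z₀, AEStronglyMeasurable (F z) μ :=
    Filter.Eventually.of_forall hmeas
  have hbd : ∀ (ω : ℝ), ω ∈ Icc (-Ω) Ω → ∀ z : ℂ, z ∈ Metric.ball z₀ 1 →
      ‖F' z ω‖ ≤ bound ω := by
    intro ω hω z hz
    have h1 : |ω| ≤ Ω := abs_le.mpr ⟨hω.1, hω.2⟩
    have himz : |z.im| ≤ ‖z₀‖ + 1 := by
      have hz' : ‖z - z₀‖ < 1 := by rwa [Metric.mem_ball, dist_eq_norm] at hz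
      have h2 : |z.im - z₀.im| ≤ ‖z - z₀‖ := by
        simpa using Complex.abs_im_le_norm (z - z₀)
      have h3 : |z₀.im| ≤ ‖z₀‖ := Complex.abs_im_le_norm z₀
      have h4 := abs_sub_abs_le_abs_sub z.im z₀.im
      linarith
    have hnorm : ‖F' z ω‖ = ‖X ω‖ * (|ω| * Real.exp (-(ω * z.im))) := by
      simp only [hF', norm_mul, Complex.norm_I, one_mul,
        Complex.norm_exp, Complex.norm_real, Real.norm_eq_abs]
      congr 3
      simp [Complex.mul_re, Complex.mul_im]
    rw [hnorm, hbound]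
    apply mul_le_mul_of_nonneg_left _ (norm_nonneg _)
    have hexp : Real.exp (-(ω * z.im)) ≤ Real.exp (Ω * (‖z₀‖ + 1)) := by
      apply Real.exp_le_exp.mpr
      calc -(ω * z.im) ≤ |ω * z.im| := neg_le_abs _
        _ = |ω| * |z.im| := abs_mul _ _
        _ ≤ Ω * (‖z₀‖ + 1) := mul_le_mul h1 himz (abs_nonneg _) hΩ.le
    exact mul_le_mul h1 hexp (Real.exp_nonneg _) hΩ.le
  have h_bound : ∀ᵐ ω ∂μ, ∀ z ∈ Metric.ball z₀ (1 : ℝ), ‖F' z ω‖ ≤ bound ω := by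
    rw [hμ, ae_restrict_iff' measurableSet_Icc]
    exact Filter.Eventually.of_forall hbd
  have hF'_meas : AEStronglyMeasurable (F' z₀) μ := by
    apply AEStronglyMeasurable.mul hXi.1
    apply Continuous.aestronglyMeasurable
    exact ((continuous_const.mul Complex.continuous_ofReal).mul
      (Complex.continuous_exp.comp ((continuous_const.mul Complex.continuous_ofReal).mul continuous_const)))
  have hF_int : Integrable (F z₀) μ := by
    apply Integrable.mono' (hXi.norm.const_mul (Real.exp (Ω * (‖z₀‖ + 1)))) (hmeas z₀)
    rw [ae_restrict_iff' measurableSet_Icc]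
    apply Filter.Eventually.of_forall
    intro ω hω
    have h1 : |ω| ≤ Ω := abs_le.mpr ⟨hω.1, hω.2⟩
    have h3 : |z₀.im| ≤ ‖z₀‖ := Complex.abs_im_le_norm z₀
    have hre : (Complex.I * ω * z₀).re = -(ω * z₀.im) := by
      simp [Complex.mul_re, Complex.mul_im]
    have hexp : ‖Complex.exp (Complex.I * ω * z₀)‖ ≤ Real.exp (Ω * (‖z₀‖ + 1)) := by
      rw [Complex.norm_exp, hre]
      apply Real.exp_le_exp.mpr
      calc -(ω * z₀.im) ≤ |ω * z₀.im| := neg_le_abs _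
        _ = |ω| * |z₀.im| := abs_mul _ _
        _ ≤ Ω * (‖z₀‖ + 1) := mul_le_mul h1 (by linarith) (abs_nonneg _) hΩ.le
    calc ‖F z₀ ω‖ = ‖X ω‖ * ‖Complex.exp (Complex.I * ω * z₀)‖ := norm_mul _ _
      _ ≤ ‖X ω‖ * Real.exp (Ω * (‖z₀‖ + 1)) :=
          mul_le_mul_of_nonneg_left hexp (norm_nonneg _)
      _ = Real.exp (Ω * (‖z₀‖ + 1)) * ‖X ω‖ := mul_comm _ _
  have bound_int : Integrable bound μ := hXi.norm.mul_const _
  have h_diff : ∀ᵐ ω ∂μ, ∀ z ∈ Metric.ball z₀ (1 : ℝ), HasDerivAt (F · ω) (F' z ω) z := by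
    apply Filter.Eventually.of_forall
    intro ω z _
    have h : HasDerivAt (fun z : ℂ => Complex.exp (Complex.I * ω * z))
        (Complex.I * ω * Complex.exp (Complex.I * ω * z)) z := by
      have h0 : HasDerivAt (fun z : ℂ => Complex.I * ω * z) (Complex.I * ω) z := by
        simpa using (hasDerivAt_id z).const_mul (Complex.I * (ω : ℂ))
      simpa [mul_comm] using h0.cexp
    exact h.const_mul (X ω)
  have key := hasDerivAt_integral_of_dominated_loc_of_deriv_le (Metric.ball_mem_nhds z₀ one_pos)
    hF_meas hF_int hF'_meas h_bound bound_int h_diff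
  exact key.2.differentiableAt

set_option maxHeartbeats 1000000 in

/-- If `x ∈ L²(ℝ)` is band-limited (it is the inverse Fourier transform of an `L²`
spectrum `X` vanishing outside `[-Ω, Ω]`) and `x` vanishes a.e. on a nondegenerate
interval `(q, s)`, then `x` is identically zero. -/
theorem bandlimited_vanish_on_interval_eq_zero
    (Ω : ℝ) (hΩ : 0 < Ω) (q s : ℝ) (hqs : q < s)
    (x : ℝ → ℂ) (hx : MemLp x 2 (volume : Measure ℝ))
    (X : ℝ → ℂ) (hX : MemLp X 2 (volume : Measure ℝ))
    (hsupp : ∀ ω : ℝ, Ω < |ω| → X ω = 0)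
    (hinv : ∀ t : ℝ, x t =
      (1 / (2 * Real.pi)) * ∫ ω in Icc (-Ω) Ω, X ω * Complex.exp (Complex.I * ω * t))
    (hzero : ∀ᵐ t ∂(volume.restrict (Ioo q s)), x t = 0) :
    ∀ t : ℝ, x t = 0 := by
  have hXr : MemLp X 2 (volume.restrict (Icc (-Ω) Ω)) := hX.restrict _
  have hfin : IsFiniteMeasure (volume.restrict (Icc (-Ω) Ω)) := by
    constructor
    rw [Measure.restrict_apply_univ]
    exact measure_Icc_lt_top
  have hXi : IntegrableOn X (Icc (-Ω) Ω) volume :=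
    memLp_one_iff_integrable.mp (hXr.mono_exponent (by norm_num))
  set G : ℂ → ℂ := fun z => ∫ ω in Icc (-Ω) Ω, X ω * Complex.exp (Complex.I * ω * z) with hGdef
  have hx_eq : ∀ t : ℝ, x t = (1 / (2 * Real.pi)) * G (t : ℂ) := hinv
  have hGdiff : Differentiable ℂ G := aux_diff Ω hΩ X hXi
  have hc : (1 / (2 * Real.pi) : ℂ) ≠ 0 := by
    simp [Real.pi_ne_zero]
  have hG0ae : ∀ᵐ (t : ℝ) ∂(volume.restrict (Ioo q s)), G (t : ℂ) = 0 := by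
    filter_upwards [hzero] with t ht
    have h := hx_eq t
    rw [ht] at h
    exact (mul_eq_zero.mp h.symm).resolve_left hc
  have hGcont : Continuous fun t : ℝ => G (t : ℂ) :=
    hGdiff.continuous.comp Complex.continuous_ofReal
  have hG0 : ∀ t ∈ Ioo q s, G (t : ℂ) = 0 := by
    by_contra h
    push_neg at h
    obtain ⟨t₁, ht₁, hGt₁⟩ := h
    set U : Set ℝ := {t | G (t : ℂ) ≠ 0} ∩ Ioo q s with hU
    have hUopen : IsOpen U :=
      (isOpen_compl_singleton.preimage hGcont).inter isOpen_Ioo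
    have hUne : U.Nonempty := ⟨t₁, hGt₁, ht₁⟩
    have hU0 : volume U = 0 := by
      have h2 := (ae_restrict_iff' (μ := volume) (s := Ioo q s) measurableSet_Ioo).mp hG0ae
      rw [ae_iff] at h2
      apply measure_mono_null _ h2
      intro t ht
      simp only [mem_setOf_eq, Classical.not_imp]
      exact ⟨ht.2, ht.1⟩
    rw [hUopen.measure_eq_zero_iff volume] at hU0
    exact hUne.ne_empty hU0
  have hGanal : AnalyticOnNhd ℂ G univ := fun z _ => hGdiff.analyticAt z
  set t₀ : ℝ := (q + s) / 2 with ht₀def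
  have ht₀ : t₀ ∈ Ioo q s := ⟨by simp only [ht₀def]; linarith, by simp only [ht₀def]; linarith⟩
  have hfreq : ∃ᶠ z in nhdsWithin (t₀ : ℂ) {(t₀ : ℂ)}ᶜ, G z = 0 := by
    set δ : ℝ := (s - t₀) / 2 with hδ
    have hδpos : 0 < δ := by
      have := ht₀.2; simp only [hδ]; linarith
    have hu : ∀ n : ℕ, (t₀ + δ / (n + 1)) ∈ Ioo q s := by
      intro n
      have hpos : (0 : ℝ) < (n : ℝ) + 1 := by positivity
      constructor
      · have : 0 < δ / (n + 1) := div_pos hδpos hpos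
        linarith [ht₀.1]
      · have h1 : δ / ((n : ℝ) + 1) ≤ δ := by
          apply div_le_self hδpos.le
          linarith [Nat.cast_nonneg (α := ℝ) n]
        have := ht₀.2
        simp only [hδ] at h1 ⊢
        linarith
    have htend : Filter.Tendsto (fun n : ℕ => ((t₀ + δ / (n + 1) : ℝ) : ℂ))
        Filter.atTop (nhdsWithin (t₀ : ℂ) {(t₀ : ℂ)}ᶜ) := by
      apply tendsto_nhdsWithin_of_tendsto_nhds_of_eventually_within
      · apply Filter.Tendsto.comp Complex.continuous_ofReal.continuousAt
        have hlim : Filter.Tendsto (fun n : ℕ => δ / ((n : ℝ) + 1)) Filter.atTop (nhds 0) := by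
          apply Filter.Tendsto.div_atTop tendsto_const_nhds
          exact Filter.tendsto_atTop_add_const_right _ 1 tendsto_natCast_atTop_atTop
        simpa using (tendsto_const_nhds (x := t₀)).add hlim
      · filter_upwards with n
        simp only [mem_compl_iff, mem_singleton_iff]
        intro hcontr
        have h1 : (t₀ + δ / (n + 1) : ℝ) = t₀ := by exact_mod_cast hcontr
        have hpos : (0 : ℝ) < (n : ℝ) + 1 := by positivity
        have h2 : δ / ((n : ℝ) + 1) = 0 := by linarith
        rw [div_eq_zero_iff] at h2
        rcases h2 with h2 | h2
        · exact hδpos.ne' h2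
        · linarith
    exact htend.frequently (Filter.Frequently.of_forall fun n => hG0 _ (hu n))
  have hGzero := hGanal.eqOn_zero_of_preconnected_of_frequently_eq_zero
    isPreconnected_univ (mem_univ (t₀ : ℂ)) hfreq
  intro t
  rw [hx_eq t, hGzero (mem_univ (t : ℂ)), Pi.zero_apply, mul_zero]
end

section
/- The restriction map Q : U_{Ω,∞} → L²(q, s) sending a spectrum X to the restriction of its inverse Fourier transform to (q, s) is linear, continuous, and injective. -/
open Complex Filter


open MeasureTheory Set

lemma myIsFinite (a b : ℝ) : IsFiniteMeasure ((volume : Measure ℝ).restrict (Icc a b)) := by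
  constructor
  rw [Measure.restrict_apply_univ, Real.volume_Icc]
  exact ENNReal.ofReal_lt_top

lemma integrableOn_Icc_of_memL2 {X : ℝ → ℂ} (hX : MemLp X 2 (volume : Measure ℝ)) (a b : ℝ) :
    IntegrableOn X (Icc a b) := by
  haveI := myIsFinite a b
  exact (hX.restrict _).integrable one_le_two

lemma integrableOn_mul_exp {X : ℝ → ℂ} {a b : ℝ} (hX : IntegrableOn X (Icc a b)) (z : ℂ) :
    IntegrableOn (fun ω : ℝ => X ω * Complex.exp (Complex.I * ω * z)) (Icc a b) := by
  have hc : ContinuousOn (fun ω : ℝ => Complex.exp (Complex.I * ω * z)) (Icc a b) := by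
    fun_prop
  obtain ⟨C, hC⟩ := (isCompact_Icc (a := a) (b := b)).exists_bound_of_continuousOn hc
  have := Integrable.bdd_mul (g := X) (f := fun ω : ℝ => Complex.exp (Complex.I * ω * z))
    (c := C) hX (hc.aestronglyMeasurable measurableSet_Icc)
    (by filter_upwards [ae_restrict_mem measurableSet_Icc] with ω hω using hC ω hω)
  simpa [mul_comm, IntegrableOn] using this
open Metric in

lemma differentiable_bandIntegral {a b : ℝ} {Z : ℝ → ℂ} (hZ : IntegrableOn Z (Icc a b)) :
    Differentiable ℂ (fun z : ℂ => ∫ ω in Icc a b, Z ω * Complex.exp (Complex.I * ω * z)) := by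
  intro z₀
  set M : ℝ := max |a| |b| with hM
  have hMnn : 0 ≤ M := le_trans (abs_nonneg a) (le_max_left _ _)
  have hmem : ∀ ω ∈ Icc a b, |ω| ≤ M := fun ω hω => abs_le.2
    ⟨le_trans (neg_le_neg (le_max_left |a| |b|)) (le_trans (neg_abs_le a) hω.1),
     le_trans hω.2 (le_trans (le_abs_self b) (le_max_right _ _))⟩
  have key := hasDerivAt_integral_of_dominated_loc_of_deriv_le
    (F := fun (z : ℂ) (ω : ℝ) => Z ω * Complex.exp (Complex.I * ω * z))
    (F' := fun (z : ℂ) (ω : ℝ) => Z ω * (Complex.I * ω * Complex.exp (Complex.I * ω * z)))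
    (μ := volume.restrict (Icc a b)) (x₀ := z₀)
    (bound := fun ω => ‖Z ω‖ * (M * Real.exp (M * (|z₀.im| + 1)))) (s := Metric.ball z₀ 1) (Metric.ball_mem_nhds z₀ one_pos)
    ?_ ?_ ?_ ?_ ?_ ?_
  · exact key.2.differentiableAt
  · filter_upwards with z
    exact (integrableOn_mul_exp hZ z).aestronglyMeasurable
  · exact integrableOn_mul_exp hZ z₀
  · apply (hZ.aestronglyMeasurable.mul ?_)
    apply Continuous.aestronglyMeasurable
    fun_prop
  · filter_upwards [ae_restrict_mem measurableSet_Icc] with ω hω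
    intro z hz
    have h1 : ‖Complex.I * (ω:ℂ) * Complex.exp (Complex.I * ω * z)‖
        ≤ M * Real.exp (M * (|z₀.im| + 1)) := by
      have h2 : |z.im| ≤ |z₀.im| + 1 := by
        have := abs_sub_abs_le_abs_sub z.im z₀.im
        have h3 : |z.im - z₀.im| ≤ ‖z - z₀‖ := by
          simpa using Complex.abs_im_le_norm (z - z₀)
        have h4 : ‖z - z₀‖ < 1 := by simpa [dist_eq_norm] using hz
        linarith
      have h5 : (Complex.I * ω * z).re = -(ω * z.im) := by
        simp [Complex.mul_re]
      have h6 : -(ω * z.im) ≤ M * (|z₀.im| + 1) := by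
        calc -(ω * z.im) ≤ |ω * z.im| := neg_le_abs _
          _ = |ω| * |z.im| := abs_mul _ _
          _ ≤ M * (|z₀.im| + 1) := by
            apply mul_le_mul (hmem ω hω) h2 (abs_nonneg _) hMnn
      simp only [norm_mul, Complex.norm_I, one_mul, Complex.norm_exp,
        Complex.norm_real, Real.norm_eq_abs, h5]
      exact mul_le_mul (hmem ω hω) (Real.exp_le_exp.2 h6) (Real.exp_nonneg _) hMnn
    calc ‖Z ω * (Complex.I * ω * Complex.exp (Complex.I * ω * z))‖
        = ‖Z ω‖ * ‖Complex.I * (ω:ℂ) * Complex.exp (Complex.I * ω * z)‖ := norm_mul _ _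
      _ ≤ ‖Z ω‖ * (M * Real.exp (M * (|z₀.im| + 1))) := by
          exact mul_le_mul_of_nonneg_left h1 (norm_nonneg _)
  · exact hZ.norm.mul_const _
  · filter_upwards with ω
    intro z hz
    have : HasDerivAt (fun z : ℂ => Complex.exp (Complex.I * ω * z))
        (Complex.I * ω * Complex.exp (Complex.I * ω * z)) z := by
      have h := ((hasDerivAt_id z).const_mul (Complex.I * (ω:ℂ))).cexp
      simpa [mul_comm] using h
    simpa [mul_assoc] using this.const_mul (Z ω)

/-- The inverse Fourier transform (with the paper's normalization) of a spectrum
supported in `[-Ω, Ω]`. -/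
noncomputable def invFourier (Ω : ℝ) (X : ℝ → ℂ) (t : ℝ) : ℂ :=
  (1 / (2 * Real.pi)) * ∫ ω in Icc (-Ω) Ω, X ω * Complex.exp (Complex.I * ω * t)

lemma part1 (Ω : ℝ) (a b : ℂ) (X Y : ℝ → ℂ) (hX : MemLp X 2 (volume : Measure ℝ))
    (hY : MemLp Y 2 (volume : Measure ℝ)) (t : ℝ) :
    invFourier Ω (fun ω => a * X ω + b * Y ω) t =
      a * invFourier Ω X t + b * invFourier Ω Y t := by
  have hXi := integrableOn_mul_exp (integrableOn_Icc_of_memL2 hX (-Ω) Ω) (t : ℂ)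
  have hYi := integrableOn_mul_exp (integrableOn_Icc_of_memL2 hY (-Ω) Ω) (t : ℂ)
  unfold invFourier
  have : ∫ ω in Icc (-Ω) Ω, (a * X ω + b * Y ω) * Complex.exp (Complex.I * ω * t)
      = a * (∫ ω in Icc (-Ω) Ω, X ω * Complex.exp (Complex.I * ω * t))
        + b * (∫ ω in Icc (-Ω) Ω, Y ω * Complex.exp (Complex.I * ω * t)) := by
    rw [← integral_const_mul, ← integral_const_mul, ← integral_add (hXi.const_mul a)
      (hYi.const_mul b)]
    apply setIntegral_congr_fun measurableSet_Icc
    intro ω _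
    ring
  rw [this]
  ring

lemma part2 (Ω q s : ℝ) (hΩ : 0 < Ω) (hqs : q < s) :
    ∃ C : ℝ, 0 ≤ C ∧ ∀ X : ℝ → ℂ, MemLp X 2 (volume : Measure ℝ) →
      (∀ ω : ℝ, Ω < |ω| → X ω = 0) →
      eLpNorm (invFourier Ω X) 2 (volume.restrict (Ioo q s)) ≤
        ENNReal.ofReal C * eLpNorm X 2 (volume : Measure ℝ) := by
  refine ⟨(s - q) ^ (2⁻¹ : ℝ) * ((1 / (2 * Real.pi)) * (2 * Ω) ^ (2⁻¹ : ℝ)), ?_, ?_⟩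
  · have h : (0:ℝ) ≤ s - q := by linarith
    positivity
  intro X hX hXs
  have hXi : IntegrableOn X (Icc (-Ω) Ω) := integrableOn_Icc_of_memL2 hX (-Ω) Ω
  set A : ℝ := ∫ ω in Icc (-Ω) Ω, ‖X ω‖ with hA
  have hAnn : 0 ≤ A := integral_nonneg fun _ => norm_nonneg _
  -- pointwise bound
  have hbd : ∀ t : ℝ, ‖invFourier Ω X t‖ ≤ (1 / (2 * Real.pi)) * A := by
    intro t
    unfold invFourier
    rw [norm_mul]
    have h1 : ‖∫ ω in Icc (-Ω) Ω, X ω * Complex.exp (Complex.I * ω * t)‖ ≤ A := by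
      refine le_trans (norm_integral_le_integral_norm _) (le_of_eq ?_)
      apply setIntegral_congr_fun measurableSet_Icc
      intro ω _
      have : (Complex.I * (ω:ℂ) * (t:ℂ)).re = 0 := by simp [Complex.mul_re]
      simp [Complex.norm_exp, this]
    have h2 : ‖(1 / (2 * (Real.pi:ℂ)))‖ = 1 / (2 * Real.pi) := by
      simp [_root_.abs_of_nonneg Real.pi_nonneg, Real.pi_nonneg]
    calc ‖(1 / (2 * (Real.pi:ℂ)))‖ * ‖∫ ω in Icc (-Ω) Ω, X ω * Complex.exp (Complex.I * ω * t)‖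
        ≤ ‖(1 / (2 * (Real.pi:ℂ)))‖ * A := by
          exact mul_le_mul_of_nonneg_left h1 (norm_nonneg _)
      _ = (1 / (2 * Real.pi)) * A := by rw [h2]
  -- L2 bound chain
  have hc : (0:ℝ) ≤ 1 / (2 * Real.pi) := by positivity
  have e1 : eLpNorm (invFourier Ω X) 2 (volume.restrict (Ioo q s)) ≤
      (ENNReal.ofReal (s - q)) ^ (2⁻¹ : ℝ) * ENNReal.ofReal ((1 / (2 * Real.pi)) * A) := by
    have h := eLpNorm_le_of_ae_bound (μ := volume.restrict (Ioo q s)) (p := 2)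
      (f := invFourier Ω X) (C := (1 / (2 * Real.pi)) * A) (Filter.Eventually.of_forall hbd)
    simpa [Measure.restrict_apply_univ, Real.volume_Ioo] using h
  have e2 : ENNReal.ofReal A = eLpNorm X 1 (volume.restrict (Icc (-Ω) Ω)) := by
    rw [eLpNorm_one_eq_lintegral_enorm, ← ofReal_integral_norm_eq_lintegral_enorm hXi]
  have e3 : eLpNorm X 1 (volume.restrict (Icc (-Ω) Ω)) ≤
      eLpNorm X 2 (volume.restrict (Icc (-Ω) Ω)) * (ENNReal.ofReal (2 * Ω)) ^ (2⁻¹ : ℝ) := by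
    have h := eLpNorm_le_eLpNorm_mul_rpow_measure_univ (p := 1) (q := 2)
      one_le_two (hX.aestronglyMeasurable.restrict (s := Icc (-Ω) Ω))
    have h2 : Ω - -Ω = 2 * Ω := by ring
    have h4 : ((1:ℝ) - 2⁻¹) = 2⁻¹ := by norm_num
    simpa [Measure.restrict_apply_univ, Real.volume_Icc, h2, h4] using h
  have e4 : eLpNorm X 2 (volume.restrict (Icc (-Ω) Ω)) ≤ eLpNorm X 2 (volume : Measure ℝ) :=
    eLpNorm_mono_measure _ Measure.restrict_le_self
  calc eLpNorm (invFourier Ω X) 2 (volume.restrict (Ioo q s))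
      ≤ (ENNReal.ofReal (s - q)) ^ (2⁻¹ : ℝ) * ENNReal.ofReal ((1 / (2 * Real.pi)) * A) := e1
    _ = (ENNReal.ofReal (s - q)) ^ (2⁻¹ : ℝ) *
        (ENNReal.ofReal (1 / (2 * Real.pi)) * ENNReal.ofReal A) := by
        rw [ENNReal.ofReal_mul hc]
    _ ≤ (ENNReal.ofReal (s - q)) ^ (2⁻¹ : ℝ) * (ENNReal.ofReal (1 / (2 * Real.pi)) *
        (eLpNorm X 2 (volume : Measure ℝ) * (ENNReal.ofReal (2 * Ω)) ^ (2⁻¹ : ℝ))) := by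
        gcongr
        rw [e2]
        exact le_trans e3 (by gcongr)
    _ = ENNReal.ofReal ((s - q) ^ (2⁻¹ : ℝ) * ((1 / (2 * Real.pi)) * (2 * Ω) ^ (2⁻¹ : ℝ))) *
        eLpNorm X 2 (volume : Measure ℝ) := by
        rw [ENNReal.ofReal_rpow_of_nonneg (by linarith : (0:ℝ) ≤ s - q)
            (by norm_num : (0:ℝ) ≤ 2⁻¹),
          ENNReal.ofReal_rpow_of_nonneg (by positivity : (0:ℝ) ≤ 2*Ω)
            (by norm_num : (0:ℝ) ≤ 2⁻¹),
          ENNReal.ofReal_mul (Real.rpow_nonneg (by linarith) _), ENNReal.ofReal_mul hc]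
        ring



lemma eq_zero_on_Ioo {F : ℝ → ℂ} (hF : Continuous F) {q s : ℝ}
    (h : ∀ᵐ t ∂(volume : Measure ℝ).restrict (Ioo q s), F t = 0) :
    ∀ t ∈ Ioo q s, F t = 0 := by
  intro t ht
  by_contra hne
  have hV : IsOpen (Ioo q s ∩ F ⁻¹' ({0}ᶜ)) :=
    isOpen_Ioo.inter (isOpen_compl_singleton.preimage hF)
  have h2 : ∀ᵐ t ∂(volume : Measure ℝ), t ∈ Ioo q s → F t = 0 :=
    (ae_restrict_iff' measurableSet_Ioo).1 h
  have h3 : (volume : Measure ℝ) (Ioo q s ∩ F ⁻¹' ({0}ᶜ)) = 0 := by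
    have := ae_iff.1 h2
    convert this using 2
    ext x
    simp only [mem_inter_iff, mem_Ioo, mem_preimage, mem_compl_iff, mem_singleton_iff,
      mem_setOf_eq, Classical.not_imp]
  exact (hV.measure_pos volume ⟨t, ht, hne⟩).ne' h3

lemma entire_zero {F : ℂ → ℂ} (hF : Differentiable ℂ F) {q s : ℝ} (hqs : q < s)
    (h0 : ∀ t ∈ Ioo q s, F t = 0) : ∀ z : ℂ, F z = 0 := by
  set m : ℝ := (q + s) / 2 with hm
  set d : ℝ := (s - q) / 2 with hd
  have hdpos : 0 < d := by simp [hd]; linarith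
  have hqm : q < m := by simp [hm]; linarith
  set r : ℕ → ℝ := fun n => m + d / (n + 2) with hr
  have hrmem : ∀ n, r n ∈ Ioo q s := by
    intro n
    have h1 : 0 < d / (n + 2 : ℝ) := by positivity
    have h2 : d / (n + 2 : ℝ) < d := by
      rw [div_lt_iff₀ (by positivity)]
      nlinarith [Nat.cast_nonneg (α := ℝ) n]
    constructor
    · simp only [hr]; linarith
    · simp only [hr, hm, hd] at *; linarith
  have hrne : ∀ n, ((r n : ℝ) : ℂ) ≠ (m : ℂ) := by
    intro n
    have h1 : 0 < d / (n + 2 : ℝ) := by positivity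
    simp only [ne_eq, Complex.ofReal_inj]
    simp only [hr]; intro hcon; linarith [hcon]
  have htend0 : Tendsto r atTop (nhds m) := by
    have h1 : Tendsto (fun n : ℕ => ((n : ℝ) + 2)⁻¹) atTop (nhds 0) :=
      tendsto_inv_atTop_zero.comp (tendsto_atTop_add_const_right _ 2 tendsto_natCast_atTop_atTop)
    have h2 : Tendsto (fun n : ℕ => m + d * ((n : ℝ) + 2)⁻¹) atTop (nhds (m + d * 0)) :=
      tendsto_const_nhds.add (h1.const_mul d)
    simpa [hr, div_eq_mul_inv] using h2
  have htend : Tendsto (fun n => ((r n : ℝ) : ℂ)) atTop (nhdsWithin (m : ℂ) {(m : ℂ)}ᶜ) := by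
    apply tendsto_nhdsWithin_of_tendsto_nhds_of_eventually_within
    · exact (Complex.continuous_ofReal.tendsto m).comp htend0
    · exact Eventually.of_forall fun n => hrne n
  have hfreq : ∃ᶠ z in nhdsWithin (m : ℂ) {(m : ℂ)}ᶜ, F z = 0 :=
    htend.frequently (Frequently.of_forall fun n => h0 (r n) (hrmem n))
  have hanal : AnalyticOnNhd ℂ F univ :=
    hF.differentiableOn.analyticOnNhd isOpen_univ
  intro z
  exact hanal.eqOn_zero_of_preconnected_of_frequently_eq_zero isPreconnected_univ
    (mem_univ _) hfreq (mem_univ z)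



lemma bandlimited_zero {Ω : ℝ} (hΩ : 0 < Ω) {Z : ℝ → ℂ}
    (hZ : MemLp Z 2 (volume : Measure ℝ))
    (hsupp : ∀ ω : ℝ, Ω < |ω| → Z ω = 0)
    (h0 : ∀ t : ℝ, (∫ ω in Icc (-Ω) Ω, Z ω * Complex.exp (Complex.I * ω * t)) = 0) :
    ∀ᵐ ω ∂(volume : Measure ℝ), Z ω = 0 := by
  set T : ℝ := 2 * Ω with hT
  have hTpos : 0 < T := by simp [hT]; linarith
  haveI : Fact (0 < T) := ⟨hTpos⟩
  have hb : -Ω + T = Ω := by simp [hT]; ring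
  obtain ⟨Z', hZ'sm, hZZ'⟩ := hZ.aestronglyMeasurable
  have hZ2' : MemLp Z' 2 (volume : Measure ℝ) := hZ.ae_eq hZZ'
  set g : AddCircle T → ℂ := AddCircle.liftIoc T (-Ω) Z' with hg
  have hgsm : StronglyMeasurable g := by
    have hmeq : g = Z' ∘ (fun x : Ioc (-Ω) (-Ω + T) => (x : ℝ)) ∘
        (AddCircle.measurableEquivIoc T (-Ω)) := rfl
    rw [hmeq]
    exact (hZ'sm.measurable.comp (measurable_subtype_coe.comp
      (AddCircle.measurableEquivIoc T (-Ω)).measurable)).stronglyMeasurable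
  have hcomp : ∀ x : ℝ, x ∈ Ioc (-Ω) (-Ω + T) → g ↑x = Z' x := fun x hx =>
    AddCircle.liftIoc_coe_apply hx
  have hgmem_vol : MemLp g 2 (volume : Measure (AddCircle T)) := by
    rw [← (AddCircle.measurePreserving_mk T (-Ω)).map_eq]
    rw [memLp_map_measure_iff hgsm.aestronglyMeasurable AddCircle.measurable_mk'.aemeasurable]
    apply (hZ2'.restrict (Ioc (-Ω) (-Ω + T))).ae_eq
    filter_upwards [ae_restrict_mem measurableSet_Ioc] with x hx
    exact (hcomp x hx).symm
  have hhaar : AddCircle.haarAddCircle =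
      (ENNReal.ofReal T)⁻¹ • (volume : Measure (AddCircle T)) := by
    rw [AddCircle.volume_eq_smul_haarAddCircle, smul_smul,
      ENNReal.inv_mul_cancel (ENNReal.ofReal_pos.2 hTpos).ne' ENNReal.ofReal_ne_top, one_smul]
  have hgmem : MemLp g 2 (AddCircle.haarAddCircle (T := T)) := by
    rw [hhaar]
    exact hgmem_vol.smul_measure (by simp [hTpos])
  -- all Fourier coefficients vanish
  have hcoeff : ∀ n : ℤ, fourierCoeff g n = 0 := by
    intro n
    rw [fourierCoeff_eq_intervalIntegral g n (-Ω)]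
    have key : (∫ x in (-Ω)..(-Ω + T), (fourier (-n) (x : AddCircle T) : ℂ) • g ↑x) = 0 := by
      rw [intervalIntegral.integral_of_le (by linarith : -Ω ≤ -Ω + T)]
      have hne : ∀ᵐ x ∂volume.restrict (Icc (-Ω) (-Ω + T)), x ≠ -Ω := by
        apply (ae_iff.2 _).filter_mono (ae_mono Measure.restrict_le_self)
        have hset : {x : ℝ | ¬ x ≠ -Ω} = {-Ω} := by ext x; simp
        rw [hset]
        exact Real.volume_singleton
      have heq : ∫ x in Ioc (-Ω) (-Ω + T), (fourier (-n) (x : AddCircle T) : ℂ) • g ↑x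
          = ∫ x in Icc (-Ω) Ω,
              Z x * Complex.exp (Complex.I * x * ((-(Real.pi * n) / Ω : ℝ) : ℂ)) := by
        have hres : Z =ᵐ[volume.restrict (Icc (-Ω) (-Ω + T))] Z' :=
          Filter.EventuallyEq.restrict hZZ'
        rw [show (Icc (-Ω) Ω : Set ℝ) = Icc (-Ω) (-Ω + T) by rw [hb],
          ← integral_Icc_eq_integral_Ioc]
        apply integral_congr_ae
        filter_upwards [hres, ae_restrict_mem measurableSet_Icc, hne] with x hx hmem hxne
        have hxIoc : x ∈ Ioc (-Ω) (-Ω + T) := ⟨lt_of_le_of_ne hmem.1 (Ne.symm hxne), hmem.2⟩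
        rw [hcomp x hxIoc, ← hx, fourier_coe_apply, smul_eq_mul, mul_comm]
        have hΩc : (Ω:ℂ) ≠ 0 := Complex.ofReal_ne_zero.mpr hΩ.ne'
        congr 1
        rw [hT]
        push_cast
        field_simp
      rw [heq]
      exact h0 _
    rw [key, smul_zero]
  -- pass to the L² space and use the Hilbert basis
  set gL := hgmem.toLp g with hgL
  have hrepr : fourierBasis.repr gL = 0 := by
    ext n
    rw [fourierBasis_repr]
    have : fourierCoeff (⇑gL) n = fourierCoeff g n := by
      apply integral_congr_ae
      filter_upwards [hgmem.coeFn_toLp] with x hx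
      rw [hx]
    simp [this, hcoeff n]
  have hgL0 : gL = 0 := by
    apply fourierBasis.repr.injective
    rw [hrepr, map_zero]
  have hg0 : g =ᵐ[AddCircle.haarAddCircle (T := T)] 0 := by
    have h1 := hgmem.coeFn_toLp
    rw [← hgL, hgL0] at h1
    exact (h1.symm.trans (Lp.coeFn_zero _ _ _))
  have hg0vol : g =ᵐ[(volume : Measure (AddCircle T))] 0 := by
    rw [AddCircle.volume_eq_smul_haarAddCircle]
    exact Measure.ae_smul_measure hg0 _
  have hZ'0 : Z' =ᵐ[volume.restrict (Ioc (-Ω) (-Ω + T))] 0 := by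
    have h1 : g ∘ ((↑) : ℝ → AddCircle T)
        =ᵐ[volume.restrict (Ioc (-Ω) (-Ω + T))] (0 : AddCircle T → ℂ) ∘ ((↑) : ℝ → AddCircle T) := by
      apply ae_eq_comp AddCircle.measurable_mk'.aemeasurable
      rw [(AddCircle.measurePreserving_mk T (-Ω)).map_eq]
      exact hg0vol
    filter_upwards [h1, ae_restrict_mem measurableSet_Ioc] with x hx hmem
    have := (hcomp x hmem).symm.trans hx
    simpa using this
  have hZ0Ioc : Z =ᵐ[volume.restrict (Ioc (-Ω) (-Ω + T))] 0 :=
    (Filter.EventuallyEq.restrict hZZ').trans hZ'0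
  apply ae_of_ae_restrict_of_ae_restrict_compl (Ioc (-Ω) (-Ω + T))
  · exact hZ0Ioc
  · have hne : ∀ᵐ x ∂(volume : Measure ℝ), x ≠ -Ω := by
      have hset : {x : ℝ | ¬ x ≠ -Ω} = {-Ω} := by ext x; simp
      rw [ae_iff, hset]
      exact Real.volume_singleton
    filter_upwards [hne.filter_mono (ae_mono Measure.restrict_le_self),
      ae_restrict_mem measurableSet_Ioc.compl] with x hxne hxmem
    apply hsupp
    rw [mem_compl_iff, mem_Ioc, not_and_or] at hxmem
    rcases hxmem with h | h
    · push_neg at h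
      have : x < -Ω := lt_of_le_of_ne h hxne
      rw [lt_abs]; right; linarith
    · push_neg at h
      rw [lt_abs]; left; linarith

lemma part3 (Ω q s : ℝ) (hΩ : 0 < Ω) (hqs : q < s) (X Y : ℝ → ℂ)
    (hX : MemLp X 2 (volume : Measure ℝ)) (hY : MemLp Y 2 (volume : Measure ℝ))
    (hXs : ∀ ω : ℝ, Ω < |ω| → X ω = 0) (hYs : ∀ ω : ℝ, Ω < |ω| → Y ω = 0)
    (hae : ∀ᵐ t ∂(volume.restrict (Ioo q s)), invFourier Ω X t = invFourier Ω Y t) :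
    ∀ᵐ ω ∂(volume : Measure ℝ), X ω = Y ω := by
  set Z : ℝ → ℂ := fun ω => X ω - Y ω with hZdef
  have hZ : MemLp Z 2 (volume : Measure ℝ) := hX.sub hY
  have hZs : ∀ ω : ℝ, Ω < |ω| → Z ω = 0 := fun ω hω => by
    simp [hZdef, hXs ω hω, hYs ω hω]
  have hZi : IntegrableOn Z (Icc (-Ω) Ω) := integrableOn_Icc_of_memL2 hZ (-Ω) Ω
  set F : ℂ → ℂ := fun z => ∫ ω in Icc (-Ω) Ω, Z ω * Complex.exp (Complex.I * ω * z) with hFdef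
  have hFd : Differentiable ℂ F := differentiable_bandIntegral hZi
  have hXi := integrableOn_Icc_of_memL2 hX (-Ω) Ω
  have hYi := integrableOn_Icc_of_memL2 hY (-Ω) Ω
  have hc : ((1 / (2 * Real.pi) : ℝ) : ℂ) ≠ 0 := by
    simp [Real.pi_ne_zero]
  have hF_sub : ∀ t : ℝ, F t = (∫ ω in Icc (-Ω) Ω, X ω * Complex.exp (Complex.I * ω * t))
      - (∫ ω in Icc (-Ω) Ω, Y ω * Complex.exp (Complex.I * ω * t)) := by
    intro t
    rw [hFdef]
    rw [← integral_sub (integrableOn_mul_exp hXi _) (integrableOn_mul_exp hYi _)]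
    apply setIntegral_congr_fun measurableSet_Icc
    intro ω _
    simp [hZdef]
    ring
  have haeF : ∀ᵐ t : ℝ ∂(volume.restrict (Ioo q s)), F ↑t = 0 := by
    filter_upwards [hae] with t ht
    rw [hF_sub t, sub_eq_zero]
    unfold invFourier at ht
    exact mul_left_cancel₀ hc (by exact_mod_cast ht)
  have hcont : Continuous fun t : ℝ => F ↑t := hFd.continuous.comp Complex.continuous_ofReal
  have hIoo : ∀ t ∈ Ioo q s, F ↑t = 0 := eq_zero_on_Ioo hcont haeF
  have hall : ∀ z : ℂ, F z = 0 := entire_zero hFd hqs hIoo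
  have hZ0 : ∀ᵐ ω ∂(volume : Measure ℝ), Z ω = 0 :=
    bandlimited_zero hΩ hZ hZs fun t => hall ↑t
  filter_upwards [hZ0] with ω hω
  exact sub_eq_zero.1 hω

/-- The restriction map `Q : U_{Ω,∞} → L²(q,s)`, sending a spectrum `X` to the
restriction of its inverse Fourier transform to `(q, s)`, is linear, continuous
and injective. -/
theorem restriction_map_linear_continuous_injective
    (Ω q s : ℝ) (hΩ : 0 < Ω) (hqs : q < s) :
    -- linearity
    (∀ (a b : ℂ) (X Y : ℝ → ℂ), MemLp X 2 (volume : Measure ℝ) →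
      MemLp Y 2 (volume : Measure ℝ) →
      (∀ ω : ℝ, Ω < |ω| → X ω = 0) → (∀ ω : ℝ, Ω < |ω| → Y ω = 0) →
      ∀ t : ℝ, invFourier Ω (fun ω => a * X ω + b * Y ω) t =
        a * invFourier Ω X t + b * invFourier Ω Y t) ∧
    -- continuity : the L²(q,s)-norm of Q X is bounded by a constant times ‖X‖₂
    (∃ C : ℝ, 0 ≤ C ∧ ∀ X : ℝ → ℂ, MemLp X 2 (volume : Measure ℝ) →
      (∀ ω : ℝ, Ω < |ω| → X ω = 0) →
      eLpNorm (invFourier Ω X) 2 (volume.restrict (Ioo q s)) ≤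
        ENNReal.ofReal C * eLpNorm X 2 (volume : Measure ℝ)) ∧
    -- injectivity
    (∀ X Y : ℝ → ℂ, MemLp X 2 (volume : Measure ℝ) → MemLp Y 2 (volume : Measure ℝ) →
      (∀ ω : ℝ, Ω < |ω| → X ω = 0) → (∀ ω : ℝ, Ω < |ω| → Y ω = 0) →
      (∀ᵐ t ∂(volume.restrict (Ioo q s)), invFourier Ω X t = invFourier Ω Y t) →
      ∀ᵐ ω ∂(volume : Measure ℝ), X ω = Y ω) := by
  refine ⟨fun a b X Y hX hY _ _ t => part1 Ω a b X Y hX hY t, part2 Ω q s hΩ hqs,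
    fun X Y hX hY hXs hYs hae => part3 Ω q s hΩ hqs X Y hX hY hXs hYs hae⟩
end

section
/- The functions t ↦ sinc(kπ + Ωt), for k = -N, ..., N, are linearly independent as elements of L²(q, s) for any nondegenerate interval (q, s). -/
open MeasureTheory Set

/-- `sinc u = sin u / u`, with `sinc 0 = 1`. -/
noncomputable def sinc (u : ℝ) : ℝ := if u = 0 then 1 else Real.sin u / u

lemma sinc_mul_self (u : ℝ) : sinc u * u = Real.sin u := by
  unfold sinc
  split
  · simp [*]
  · field_simp

/-- The functions `t ↦ sinc(kπ + Ωt)`, `k = -N, …, N`, are linearly independent on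
any nondegenerate interval `(q, s)`: a linear combination vanishing on `(q,s)` has
all coefficients zero. -/
theorem sinc_translates_linearly_independent
    (Ω q s : ℝ) (hΩ : 0 < Ω) (hqs : q < s) (N : ℕ)
    (y : ℤ → ℂ)
    (hy : ∀ t ∈ Ioo q s,
      (∑ k ∈ Finset.Icc (-(N : ℤ)) (N : ℤ),
        y k * (sinc (k * Real.pi + Ω * t) : ℝ)) = 0) :
    ∀ k ∈ Finset.Icc (-(N : ℤ)) (N : ℤ), y k = 0 := by
  set F := Finset.Icc (-(N : ℤ)) (N : ℤ) with hF
  set π := Real.pi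
  set Q : Polynomial ℂ := ∑ k ∈ F, Polynomial.C ((y k) * (-1)^k) *
      ∏ j ∈ F.erase k, (Polynomial.C ((j : ℂ) * (π : ℂ)) + Polynomial.C (Ω : ℂ) * Polynomial.X)
    with hQ
  -- evaluation formula
  have heval : ∀ z : ℂ, Q.eval z = ∑ k ∈ F, (y k) * (-1)^k *
      ∏ j ∈ F.erase k, ((j : ℂ) * (π : ℂ) + (Ω : ℂ) * z) := by
    intro z
    simp [hQ, Polynomial.eval_finset_sum, Polynomial.eval_prod]
  -- Q vanishes at good points
  have hzero : ∀ t ∈ Ioo q s, Real.sin (Ω * t) ≠ 0 → Q.eval (t : ℂ) = 0 := by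
    intro t ht hsin
    have h0 := hy t ht
    have key : ((Real.sin (Ω * t) : ℝ) : ℂ) * Q.eval (t : ℂ) =
        (∑ k ∈ F, y k * (sinc (k * π + Ω * t) : ℝ)) *
          ∏ j ∈ F, (((j : ℝ) * π + Ω * t : ℝ) : ℂ) := by
      rw [heval, Finset.sum_mul, Finset.mul_sum]
      refine Finset.sum_congr rfl fun k hk => ?_
      rw [← Finset.mul_prod_erase F _ hk]
      have h1 : (sinc ((k : ℝ) * π + Ω * t) : ℂ) * (((k : ℝ) * π + Ω * t : ℝ) : ℂ)
          = ((Real.sin ((k : ℝ) * π + Ω * t) : ℝ) : ℂ) := by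
        rw [← Complex.ofReal_mul, sinc_mul_self]
      have h2 : Real.sin ((k : ℝ) * π + Ω * t) = (-1 : ℝ)^k * Real.sin (Ω * t) := by
        rw [add_comm, Real.sin_add_int_mul_pi]
      have h3 : ∀ j : ℤ, (((j : ℝ) * π + Ω * t : ℝ) : ℂ) = (j : ℂ) * (π : ℂ) + (Ω : ℂ) * (t : ℂ) := by
        intro j; push_cast; ring
      calc ((Real.sin (Ω * t) : ℝ) : ℂ) * (y k * (-1)^k *
            ∏ j ∈ F.erase k, ((j : ℂ) * (π : ℂ) + (Ω : ℂ) * (t : ℂ)))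
          = (y k * (((-1 : ℝ)^k * Real.sin (Ω * t) : ℝ) : ℂ)) *
            ∏ j ∈ F.erase k, ((j : ℂ) * (π : ℂ) + (Ω : ℂ) * (t : ℂ)) := by
            push_cast; ring
        _ = _ := by
            rw [← h2, ← h1, h3]
            rw [Finset.prod_congr rfl fun j _ => (h3 j).symm]
            ring
    rw [h0, zero_mul] at key
    have : ((Real.sin (Ω * t) : ℝ) : ℂ) ≠ 0 := by exact_mod_cast hsin
    exact (mul_eq_zero.mp key).resolve_left this
  -- the bad set is finite
  have hbad : {t : ℝ | t ∈ Ioo q s ∧ Real.sin (Ω * t) = 0}.Finite := by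
    have hsub : {t : ℝ | t ∈ Ioo q s ∧ Real.sin (Ω * t) = 0} ⊆
        (fun n : ℤ => (n : ℝ) * π / Ω) '' (Set.Icc ⌈q * Ω / π⌉ ⌊s * Ω / π⌋ : Set ℤ) := by
      rintro t ⟨⟨hq, hs⟩, ht⟩
      obtain ⟨n, hn⟩ := Real.sin_eq_zero_iff.mp ht
      refine ⟨n, ⟨?_, ?_⟩, ?_⟩
      · rw [Int.ceil_le]
        rw [div_le_iff₀ Real.pi_pos]
        nlinarith [Real.pi_pos]
      · rw [Int.le_floor]
        rw [le_div_iff₀ Real.pi_pos]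
        nlinarith [Real.pi_pos]
      · field_simp
        linarith [hn]
    exact Set.Finite.subset (Set.Finite.image _ (Set.finite_Icc _ _)) hsub
  -- Q has infinitely many roots hence is zero
  have hQ0 : Q = 0 := by
    apply Polynomial.eq_zero_of_infinite_isRoot
    have hS : (Ioo q s \ {t : ℝ | t ∈ Ioo q s ∧ Real.sin (Ω * t) = 0}).Infinite :=
      (Set.Ioo_infinite hqs).diff hbad
    have : (Complex.ofReal '' (Ioo q s \ {t : ℝ | t ∈ Ioo q s ∧ Real.sin (Ω * t) = 0})).Infinite :=
      hS.image (Complex.ofReal_injective.injOn)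
    refine this.mono ?_
    rintro z ⟨t, ⟨ht, hbadt⟩, rfl⟩
    exact hzero t ht fun h => hbadt ⟨ht, h⟩
  -- conclude
  intro k hk
  have h0 : Q.eval ((-(k : ℝ) * π / Ω : ℝ) : ℂ) = 0 := by rw [hQ0]; simp
  rw [heval] at h0
  have hfac : ∀ j : ℤ, (j : ℂ) * (π : ℂ) + (Ω : ℂ) * ((-(k : ℝ) * π / Ω : ℝ) : ℂ)
      = ((j - k : ℤ) : ℂ) * (π : ℂ) := by
    intro j
    have hΩ' : (Ω : ℂ) ≠ 0 := by exact_mod_cast hΩ.ne'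
    push_cast
    field_simp
    ring
  rw [Finset.sum_eq_single k] at h0
  · have hne : (∏ j ∈ F.erase k, ((j : ℂ) * (π : ℂ) + (Ω : ℂ) * ((-(k : ℝ) * π / Ω : ℝ) : ℂ))) ≠ 0 := by
      rw [Finset.prod_congr rfl fun j _ => hfac j]
      apply Finset.prod_ne_zero_iff.mpr
      intro j hj
      have hjk : j ≠ k := Finset.ne_of_mem_erase hj
      apply mul_ne_zero
      · exact_mod_cast sub_ne_zero.mpr hjk
      · exact_mod_cast Real.pi_ne_zero
    have hm1 : ((-1 : ℂ)^k) ≠ 0 := by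
      apply zpow_ne_zero; norm_num
    have := mul_eq_zero.mp h0
    rcases this with h | h
    · rcases mul_eq_zero.mp h with h' | h'
      · exact h'
      · exact absurd h' hm1
    · exact absurd h hne
  · intro l hl hlk
    apply mul_eq_zero_of_right
    apply Finset.prod_eq_zero (Finset.mem_erase.mpr ⟨Ne.symm hlk, hk⟩)
    rw [hfac k]
    simp
  · intro h; exact absurd hk h
end
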